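/- Fix k ≥ 1 and Σ = {a,b}. Let S = Σ^{≤k} be the set of nonempty words over Σ of length at most k, with product u·v defined as the prefix of length min(|u|+|v|, k) of the concatenation uv (so that the elements of length exactly k are right-absorbing, and they are exactly the idempotents of S). Let φ: Σ⁺ → S be the semigroup morphism with φ(x) = x for x ∈ Σ (i.e., φ(w) is the prefix of w of length min(|w|,k)). Then there is no φ-weakly-good deterministic automaton with (k−1)-look-ahead, whereas there is a φ-weakly-good deterministic automaton with k-look-ahead. -/

import Mathlib

theorem take_append_take_left {α : Type} (l l' : List α) (k : ℕ) :
    (l.take k ++ l').take k = (l ++ l').take k := by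
  rw [List.take_append, List.take_append, List.take_take,
    List.length_take]
  have h1 : k ⊓ k = k := min_self k
  have h2 : k - k ⊓ l.length = k - l.length := by omega
  rw [h1, h2]

theorem take_append_take_right {α : Type} (l l' : List α) (k : ℕ) :
    (l ++ l'.take k).take k = (l ++ l').take k := by
  rw [List.take_append, List.take_append, List.take_take]
  have h : (k - l.length) ⊓ k = k - l.length := min_eq_left (Nat.sub_le _ _)
  rw [h]

/-- The semigroup `S = Σ^{≤k}` of nonempty words of length at most `k` over
`Σ = {a,b} = Bool`; `u * v` is the prefix of length `min(|u|+|v|, k)` of `uv`,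
so elements of length `k` are right-absorbing and are exactly the idempotents. -/
def Sk (k : ℕ) : Type := {w : List Bool // w ≠ [] ∧ w.length ≤ k}

instance (k : ℕ) [NeZero k] : Mul (Sk k) :=
  ⟨fun u v =>
    ⟨(u.val ++ v.val).take k, by
      have hk : 0 < k := Nat.pos_of_ne_zero (NeZero.ne k)
      have hu := u.property.1
      constructor
      · intro h
        rcases List.take_eq_nil_iff.mp h with h | h
        · omega
        · exact hu (List.append_eq_nil_iff.mp h).1
      · rw [List.length_take]; exact min_le_left _ _⟩⟩

instance (k : ℕ) [NeZero k] : Semigroup (Sk k) where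
  mul_assoc u v w := by
    apply Subtype.ext
    show ((u.val ++ v.val).take k ++ w.val).take k
        = (u.val ++ (v.val ++ w.val).take k).take k
    rw [take_append_take_left, take_append_take_right, List.append_assoc]

/-- A deterministic automaton with `m`-look-ahead: the transition function
reads the current letter together with the word formed by the (at most `m`)
following letters. -/
structure LAuto (A : Type) (m : ℕ) where
  Q : Type
  fin : Fintype Q
  lin : LinearOrder Q
  δ : Q → A → {v : List A // v.length ≤ m} → Q
  init : Q
  final : Set Q
  rep : Set Q

namespace LAuto

variable {A : Type} {m : ℕ} (M : LAuto A m)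

/-- The strict order on states. -/
def slt (p q : M.Q) : Prop := M.lin.lt p q

/-- The unique run on a finite word: `runF w i` is the state after reading the
first `i` letters, the look-ahead at letter `i` being the next
`min(m, |w| - i - 1)` letters. -/
def runF (w : List A) : ℕ → M.Q
  | 0 => M.init
  | i + 1 =>
    if h : i < w.length then
      M.δ (runF w i) (w.get ⟨i, h⟩)
        ⟨(w.drop (i + 1)).take m, by rw [List.length_take]; exact min_le_left _ _⟩
    else runF w i

/-- The unique run on an infinite word, with look-ahead the next `m` letters. -/
def runI (w : ℕ → A) : ℕ → M.Q
  | 0 => M.init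
  | i + 1 =>
    M.δ (runI w i) (w i) ⟨(List.range m).map fun t => w (i + 1 + t), by simp⟩

def AcceptsFin (w : List A) : Prop := M.runF w w.length ∈ M.final

def AcceptsInf (w : ℕ → A) : Prop := ∀ n, ∃ j, n ≤ j ∧ M.runI w j ∈ M.rep

/-- `L_q`: nonempty words `v` such that, within the unique run of `M` on some
finite or infinite word, some portion labeled `v` starts and ends at `q` with
all intermediate states strictly below `q`. -/
def Lq (q : M.Q) : Set (List A) :=
  {v | v ≠ [] ∧
    ((∃ (w : List A) (i : ℕ), i + v.length ≤ w.length ∧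
        (w.drop i).take v.length = v ∧
        M.runF w i = q ∧ M.runF w (i + v.length) = q ∧
        ∀ j, i < j → j < i + v.length → M.slt (M.runF w j) q) ∨
     (∃ (w : ℕ → A) (i : ℕ),
        ((List.range v.length).map fun t => w (i + t)) = v ∧
        M.runI w i = q ∧ M.runI w (i + v.length) = q ∧
        ∀ j, i < j → j < i + v.length → M.slt (M.runI w j) q))}

/-- `φ`-weakly-good look-ahead automaton: (G1) every finite or infinite word
is accepted; (G2) each `L_q` is mapped by `φ` to a single idempotent;
(G3) the initial state has no incoming transitions and is maximal. -/
def WeaklyGood {S : Type} [Semigroup S] (φ : List A → S) : Prop :=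
  ((∀ w : List A, w ≠ [] → M.AcceptsFin w) ∧ (∀ w : ℕ → A, M.AcceptsInf w)) ∧
  (∀ q : M.Q, ∃ e : S, e * e = e ∧ ∀ v ∈ M.Lq q, φ v = e) ∧
  ((∀ p a v, M.δ p a v ≠ M.init) ∧ ∀ q : M.Q, q ≠ M.init → M.slt q M.init)

end LAuto

/-- The morphism `φ : Σ⁺ → Σ^{≤k}` sending a nonempty word to its prefix of
length `min(|w|, k)` (it maps each letter to itself); the value on `[]` is a
junk value. -/
def phiK (k : ℕ) [NeZero k] (w : List Bool) : Sk k :=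
  if h : w = [] then
    ⟨[true], by simp, by
      simpa using Nat.one_le_iff_ne_zero.mpr (NeZero.ne k)⟩
  else
    ⟨w.take k, by
      constructor
      · intro hnil
        rcases List.take_eq_nil_iff.mp hnil with h' | h'
        · exact absurd h' (NeZero.ne k)
        · exact h h'
      · rw [List.length_take]; exact min_le_left _ _⟩

/-! ### Auxiliary material for the proof -/

section Adversarial

variable {m : ℕ} (M : LAuto Bool m) (g : M.Q → Bool)

mutual
/-- The states of the run on the adversarial word. -/
def advP : ℕ → M.Q
  | 0 => M.init
  | i+1 => M.δ (advP i) (advL i)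
      ⟨List.ofFn (fun t : Fin m => advL (i+1+t)), by simp⟩
  termination_by i => 2*i
  decreasing_by
    all_goals simp_wf
    all_goals first | omega | (have := t.isLt; omega)
/-- The adversarial word: letter `j` (for `j ≥ m`) is chosen depending on the
state at time `j - m`, which only depends on letters `< j`. -/
def advL : ℕ → Bool
  | j => if m ≤ j then g (advP (j - m)) else true
  termination_by j => 2*(j-m)+1
  decreasing_by
    all_goals simp_wf
    all_goals omega
end

lemma advL_def (j : ℕ) : advL M g j = if m ≤ j then g (advP M g (j - m)) else true := by
  rw [advL]

lemma runI_advL : ∀ i, M.runI (advL M g) i = advP M g i := by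
  intro i
  induction i with
  | zero => rw [advP]; rfl
  | succ i ih =>
    rw [LAuto.runI, ih, advP]
    congr 1
    apply Subtype.ext
    apply List.ext_getElem
    · simp
    · intro n h1 h2
      simp

end Adversarial

lemma Sk_mul_val {k : ℕ} [NeZero k] (u v : Sk k) : (u * v).val = (u.val ++ v.val).take k := rfl

lemma Sk_idem_length {k : ℕ} [NeZero k] (u : Sk k) (h : u * u = u) : u.val.length = k := by
  have h1 : (u.val ++ u.val).take k = u.val := by
    rw [← Sk_mul_val, h]
  have h2 := congrArg List.length h1
  have h3 : u.val.length ≤ k := u.property.2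
  have h4 : u.val ≠ [] := u.property.1
  have h5 : 0 < u.val.length := List.length_pos_iff.mpr h4
  simp [List.length_take] at h2
  omega

lemma phiK_val {k : ℕ} [NeZero k] (v : List Bool) (hv : v ≠ []) :
    (phiK k v).val = v.take k := by
  simp [phiK, hv]

lemma part1 (k : ℕ) [NeZero k] : ¬ ∃ M : LAuto Bool (k - 1), M.WeaklyGood (phiK k) := by
  rintro ⟨M, ⟨_hG1, hG2, _hG3⟩⟩
  letI := M.fin
  letI := M.lin
  have hk : 0 < k := Nat.pos_of_ne_zero (NeZero.ne k)
  choose e he1 he2 using hG2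
  set g : M.Q → Bool := fun q => !((e q).val.getD (k-1) true) with hg
  set w : ℕ → Bool := advL M g with hw
  set r : ℕ → M.Q := fun i => M.runI w i with hr
  have hrP : ∀ i, r i = advP M g i := fun i => runI_advL M g i
  -- the set of states visited infinitely often
  set T : Set M.Q := {q | (r ⁻¹' {q}).Infinite} with hT
  have hTne : T.Nonempty := by
    obtain ⟨q0, hq0⟩ := Finite.exists_infinite_fiber r
    exact ⟨q0, Set.infinite_coe_iff.mp hq0⟩
  obtain ⟨q, hqT, hqmax⟩ := Set.Finite.exists_maximalFor id T (Set.toFinite T) hTne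
  -- states above q occur only finitely often
  have hfin : {j | q < r j}.Finite := by
    by_contra hinf
    have hinf : {j | q < r j}.Infinite := hinf
    haveI := hinf.to_subtype
    obtain ⟨p, hp0⟩ := Finite.exists_infinite_fiber (fun j : {j | q < r j} => r j.val)
    have hp : ((fun j : {j | q < r j} => r j.val) ⁻¹' {p}).Infinite := Set.infinite_coe_iff.mp hp0
    have him : (Subtype.val '' ((fun j : {j | q < r j} => r j.val) ⁻¹' {p})).Infinite :=
      hp.image (Set.injOn_of_injective Subtype.val_injective)
    have hsub : (Subtype.val '' ((fun j : {j | q < r j} => r j.val) ⁻¹' {p})) ⊆ r ⁻¹' {p} := by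
      rintro x ⟨⟨j, hj⟩, hmem, rfl⟩
      exact hmem
    have hpT : p ∈ T := Set.Infinite.mono hsub him
    obtain ⟨⟨j, hj⟩, hjp⟩ := hp.nonempty
    have hqp : q < p := by
      have : r j = p := hjp
      rw [← this]; exact hj
    exact absurd (hqmax hpT (le_of_lt hqp)) (not_le.mpr hqp)
  obtain ⟨N, hN⟩ := hfin.bddAbove
  have hle : ∀ j, N < j → r j ≤ q := by
    intro j hj
    by_contra hc
    exact absurd (hN (not_le.mp hc)) (by omega)
  -- two consecutive visits to q after N
  obtain ⟨i₀, hi₀T, hi₀N⟩ := Set.Infinite.exists_gt hqT N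
  have hi₀ : r i₀ = q := hi₀T
  have hex : ∃ j, i₀ < j ∧ r j = q := by
    obtain ⟨j, hjT, hj⟩ := Set.Infinite.exists_gt hqT i₀
    exact ⟨j, hj, hjT⟩
  set i₁ := Nat.find hex with hi₁def
  obtain ⟨hi₁gt, hi₁⟩ := Nat.find_spec hex
  set v : List Bool := (List.range (i₁ - i₀)).map (fun t => w (i₀ + t)) with hv
  have hvlen : v.length = i₁ - i₀ := by simp [hv]
  have hvne : v ≠ [] := by
    have : 0 < v.length := by rw [hvlen]; omega
    exact List.length_pos_iff.mp this
  have hLq : v ∈ M.Lq q := by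
    refine ⟨hvne, Or.inr ⟨w, i₀, ?_, hi₀, ?_, ?_⟩⟩
    · rw [hvlen]
    · rw [hvlen]
      have : i₀ + (i₁ - i₀) = i₁ := by omega
      rw [this]
      exact hi₁
    · intro j hj1 hj2
      rw [hvlen] at hj2
      have hj3 : j < i₁ := by omega
      have h4 : r j ≤ q := hle j (by omega)
      have h5 : r j ≠ q := by
        intro h
        exact absurd ⟨hj1, h⟩ (Nat.find_min hex hj3)
      exact lt_of_le_of_ne h4 h5
  have hphi : phiK k v = e q := he2 q v hLq
  have helen : (e q).val.length = k := Sk_idem_length _ (he1 q)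
  have htake : v.take k = (e q).val := by
    rw [← phiK_val v hvne, hphi]
  have hvk : k ≤ v.length := by
    have := congrArg List.length htake
    simp [List.length_take, helen] at this
    omega
  -- letter at position i₀ + (k-1)
  have hkm : k - 1 < v.length := by omega
  have h1 : v[k-1]'hkm = w (i₀ + (k-1)) := by
    simp [hv]
  have h2 : v[k-1]'hkm = (e q).val.getD (k-1) true := by
    have hk2 : k - 1 < (v.take k).length := by
      simp [List.length_take]; omega
    have : (v.take k)[k-1]'hk2 = v[k-1]'hkm := List.getElem_take
    rw [← this]
    rw [List.getD_eq_getElem _ _ (by rw [helen]; omega)]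
    simp only [htake]
  have h3 : w (i₀ + (k-1)) = g q := by
    have e1 : w (i₀ + (k-1)) = g (advP M g (i₀ + (k-1) - (k-1))) := by
      rw [hw, advL_def, if_pos (by omega : k - 1 ≤ i₀ + (k-1))]
    have harg : i₀ + (k-1) - (k-1) = i₀ := by omega
    rw [e1, harg, ← hrP i₀, hi₀]
  rw [h3, hg] at h1
  rw [h1] at h2
  simp at h2

section Existence

variable (k : ℕ) [NeZero k]

open Fin.NatCast

/-- Auxiliary state data: a counter mod `k` and a (padded) look-ahead word. -/
abbrev StB := Fin k × (Fin k → Bool)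

/-- Pad a look-ahead word to a function `Fin k → Bool`. -/
def pad (L : List Bool) : Fin k → Bool := fun j => L.getD j true

/-- Counter of a state. -/
def cOf : Option (StB k) → Fin k := fun p => p.elim 0 Prod.fst

/-- Embedding of states into `Fin _`, sending `none` to the top. -/
noncomputable def emb : Option (StB k) → Fin (Fintype.card (StB k) + 1) :=
  fun p => p.elim (Fin.last _) (fun b => (Fintype.equivFin (StB k) b).castSucc)

lemma emb_inj : Function.Injective (emb k) := by
  intro a b h
  match a, b with
  | none, none => rfl
  | none, some b =>
    exact absurd h.symm (ne_of_lt (Fin.castSucc_lt_last _))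
  | some a, none =>
    exact absurd h (ne_of_lt (Fin.castSucc_lt_last _))
  | some a, some b =>
    simp only [emb, Option.elim] at h
    have := (Fintype.equivFin (StB k)).injective (Fin.castSucc_injective _ h)
    rw [this]

/-- The `φ`-weakly-good automaton with `k`-look-ahead. -/
noncomputable def MA : LAuto Bool k where
  Q := Option (StB k)
  fin := inferInstance
  lin := LinearOrder.lift' (emb k) (emb_inj k)
  δ := fun p _ v => some (cOf k p + 1, pad k v.val)
  init := none
  final := Set.univ
  rep := Set.univ

lemma MA_runF (w : List Bool) :
    ∀ i, 1 ≤ i → i ≤ w.length →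
      (MA k).runF w i = some ((i : Fin k), pad k ((w.drop i).take k)) := by
  intro i
  induction i with
  | zero => omega
  | succ i ih =>
    intro _ hle
    rw [LAuto.runF, dif_pos (show i < w.length by omega)]
    rcases Nat.eq_zero_or_pos i with h0 | hpos
    · subst h0
      show some (cOf k ((MA k).runF w 0) + 1, _) = _
      have : (MA k).runF w 0 = none := rfl
      rw [this]
      simp [cOf, Nat.cast_one]
    · rw [ih hpos (by omega)]
      show some (cOf k _ + 1, _) = _
      simp [cOf, Nat.cast_add_one]

lemma MA_runI (w : ℕ → Bool) :
    ∀ i, 1 ≤ i →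
      (MA k).runI w i = some ((i : Fin k), pad k ((List.range k).map fun t => w (i + t))) := by
  intro i
  induction i with
  | zero => omega
  | succ i ih =>
    intro _
    rw [LAuto.runI]
    rcases Nat.eq_zero_or_pos i with h0 | hpos
    · subst h0
      show some (cOf k ((MA k).runI w 0) + 1, _) = _
      have : (MA k).runI w 0 = none := rfl
      rw [this]
      simp [cOf, Nat.cast_one]
    · rw [ih hpos]
      show some (cOf k _ + 1, _) = _
      simp [cOf, Nat.cast_add_one]

lemma natCast_fin_eq {i i' : ℕ} (h : (i : Fin k) = (i' : Fin k)) : i % k = i' % k := by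
  have := congrArg Fin.val h
  simpa [Fin.val_natCast] using this

lemma dvd_of_visits {i L : ℕ} (h : (i : Fin k) = ((i + L : ℕ) : Fin k)) : k ∣ L := by
  have h1 : i % k = (i + L) % k := natCast_fin_eq k h
  have := (Nat.modEq_iff_dvd' (Nat.le_add_right i L)).mp h1
  simpa using this

lemma ofFn_pad (L : List Bool) (h : L.length = k) :
    List.ofFn (fun j : Fin k => pad k L j) = L := by
  apply List.ext_getElem
  · simp [h]
  · intro n h1 h2
    rw [List.getElem_ofFn]
    simp only [pad]
    exact List.getD_eq_getElem _ _ (by omega)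

/-- The idempotent attached to a state. -/
def EOf : Option (StB k) → Sk k :=
  fun q => match q with
  | none => ⟨List.replicate k true, by
      constructor
      · intro h
        have := congrArg List.length h
        simp at this
        exact NeZero.ne k this
      · simp⟩
  | some (_, u) => ⟨List.ofFn u, by
      constructor
      · intro h
        have := congrArg List.length h
        simp at this
        exact NeZero.ne k this
      · simp⟩

lemma EOf_len (q : Option (StB k)) : (EOf k q).val.length = k := by
  match q with
  | none => simp [EOf]
  | some (c, u) => simp [EOf]

lemma take_k_self (L L' : List Bool) (h : L.length = k) : (L ++ L').take k = L := by
  rw [← h]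
  exact List.take_left

lemma EOf_idem (q : Option (StB k)) : EOf k q * EOf k q = EOf k q := by
  apply Subtype.ext
  show ((EOf k q).val ++ (EOf k q).val).take k = (EOf k q).val
  exact take_k_self k _ _ (EOf_len k q)

lemma part2 : ∃ M : LAuto Bool k, M.WeaklyGood (phiK k) := by
  have hk : 0 < k := Nat.pos_of_ne_zero (NeZero.ne k)
  refine ⟨MA k, ⟨⟨fun w _ => Set.mem_univ _, fun w n => ⟨n, le_refl n, Set.mem_univ _⟩⟩, ?_, ?_, ?_⟩⟩
  · -- G2
    intro q
    refine ⟨EOf k q, EOf_idem k q, ?_⟩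
    rintro v ⟨hvne, hcase⟩
    have hvpos : 0 < v.length := List.length_pos_iff.mpr hvne
    rcases hcase with ⟨w, i, hlen, hv, hqi, hqi', _⟩ | ⟨w, i, hv, hqi, hqi', _⟩
    · -- finite word case
      have hi1 : 1 ≤ i := by
        by_contra hc
        have hi0 : i = 0 := by omega
        subst hi0
        have h0 : (MA k).runF w 0 = none := rfl
        rw [h0] at hqi
        rw [Nat.zero_add] at hqi'
        rw [MA_runF k w v.length (by omega) (by omega)] at hqi'
        rw [← hqi] at hqi'
        simp at hqi'
      rw [MA_runF k w i hi1 (by omega)] at hqi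
      rw [MA_runF k w (i + v.length) (by omega) (by omega)] at hqi'
      rw [← hqi'] at hqi
      have hcnt : ((i + v.length : ℕ) : Fin k) = (i : Fin k) := by
        have := congrArg (fun o => (Option.map Prod.fst o).getD 0) hqi
        simpa using this
      have hdvd : k ∣ v.length := dvd_of_visits k hcnt.symm
      have hvk : k ≤ v.length := Nat.le_of_dvd hvpos hdvd
      -- q = some ((i+|v| : Fin k), pad L) with L = (w.drop i).take k
      have hLlen : ((w.drop i).take k).length = k := by
        simp [List.length_take, List.length_drop]
        omega
      have hupad : q = some (((i + v.length : ℕ) : Fin k), pad k ((w.drop i).take k)) := by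
        rw [← hqi', ← hqi]
        congr 1
        rw [Prod.ext_iff]
        exact ⟨hcnt.symm ▸ rfl, rfl⟩
      have htakek : v.take k = (w.drop i).take k := by
        rw [← hv, List.take_take]
        congr 1
        omega
      apply Subtype.ext
      rw [phiK_val v hvne, htakek, hupad]
      show _ = (EOf k (some (_, pad k ((w.drop i).take k)))).val
      show _ = List.ofFn (fun j => pad k ((w.drop i).take k) j)
      rw [ofFn_pad k _ hLlen]
    · -- infinite word case
      have hi1 : 1 ≤ i := by
        by_contra hc
        have hi0 : i = 0 := by omega
        subst hi0
        have h0 : (MA k).runI w 0 = none := rfl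
        rw [h0] at hqi
        rw [Nat.zero_add] at hqi'
        rw [MA_runI k w v.length (by omega)] at hqi'
        rw [← hqi] at hqi'
        simp at hqi'
      rw [MA_runI k w i hi1] at hqi
      rw [MA_runI k w (i + v.length) (by omega)] at hqi'
      rw [← hqi'] at hqi
      have hcnt : ((i + v.length : ℕ) : Fin k) = (i : Fin k) := by
        have := congrArg (fun o => (Option.map Prod.fst o).getD 0) hqi
        simpa using this
      have hdvd : k ∣ v.length := dvd_of_visits k hcnt.symm
      have hvk : k ≤ v.length := Nat.le_of_dvd hvpos hdvd
      have hLlen : (((List.range k).map fun t => w (i + t)) : List Bool).length = k := by simp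
      have hupad : q = some (((i + v.length : ℕ) : Fin k),
          pad k ((List.range k).map fun t => w (i + t))) := by
        rw [← hqi', ← hqi]
        congr 1
        rw [Prod.ext_iff]
        exact ⟨hcnt.symm ▸ rfl, rfl⟩
      have htakek : v.take k = (List.range k).map fun t => w (i + t) := by
        rw [← hv, ← List.map_take, List.take_range, min_eq_left hvk]
      apply Subtype.ext
      rw [phiK_val v hvne, htakek, hupad]
      show _ = List.ofFn (fun j => pad k ((List.range k).map fun t => w (i + t)) j)
      rw [ofFn_pad k _ hLlen]
  · -- G3a
    intro p a v
    show some _ ≠ none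
    simp
  · -- G3b
    intro q hq
    show (MA k).lin.lt q ((MA k).init)
    match q with
    | none => exact absurd rfl hq
    | some b =>
      show emb k (some b) < emb k none
      exact Fin.castSucc_lt_last _

end Existence


/-- **Look-ahead lower bound.** For the morphism `φ : Σ⁺ → Σ^{≤k}`, there is
no `φ`-weakly-good deterministic automaton with `(k-1)`-look-ahead, whereas
there is a `φ`-weakly-good deterministic automaton with `k`-look-ahead. -/
theorem no_weaklyGood_with_small_lookahead (k : ℕ) [NeZero k] :
    (¬ ∃ M : LAuto Bool (k - 1), M.WeaklyGood (phiK k)) ∧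
    (∃ M : LAuto Bool k, M.WeaklyGood (phiK k)) := by
  exact ⟨part1 k, part2 k⟩
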